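/- Suppose h = P ∘ Q with h, P, Q ∈ A_n. Write the graded decompositions h = Σ_z h_z, P = Σ_α P_α, Q = Σ_β Q_β (finitely many nonzero components), and for each degree let h̃_z, p̃_α, q̃_β ∈ K[t_1,…,t_n] be the unique polynomials with h_z = h̃_z(θ)∘X^{e(z)}∘D^{w(z)}, P_α = p̃_α(θ)∘X^{e(α)}∘D^{w(α)}, Q_β = q̃_β(θ)∘X^{e(β)}∘D^{w(β)}. Then for every z ∈ ℤ^n the following identity holds in the commutative polynomial ring K[t_1,…,t_n]: h̃_z = Σ_{α+β=z} p̃_α · q̃_β^{[α]} · γ_{α,β}, where q̃_β^{[α]} denotes q̃_β with each variable t_i replaced by t_i + α_i. In particular, a factorization h = P∘Q in A_n corresponds to a solution of this finite commutative polynomial system. -/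

import Mathlib

open MvPolynomial

/-- Multiplication by the variable `x i`, as a `K`-linear endomorphism of
`K[x_1,…,x_n]`. -/
noncomputable def Xop (K : Type) [Field K] {n : ℕ} (i : Fin n) :
    Module.End K (MvPolynomial (Fin n) K) :=
  LinearMap.mulLeft K (X i)

/-- The `i`-th partial derivative, as a `K`-linear endomorphism of `K[x_1,…,x_n]`. -/
noncomputable def Dop (K : Type) [Field K] {n : ℕ} (i : Fin n) :
    Module.End K (MvPolynomial (Fin n) K) :=
  (pderiv i).toLinearMap

/-- `X^a := X_1^{a_1} ∘ ⋯ ∘ X_n^{a_n}`. -/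
noncomputable def Xpow (K : Type) [Field K] {n : ℕ} (a : Fin n → ℕ) :
    Module.End K (MvPolynomial (Fin n) K) :=
  (List.ofFn fun i => Xop K i ^ a i).prod

/-- `D^b := D_1^{b_1} ∘ ⋯ ∘ D_n^{b_n}`. -/
noncomputable def Dpow (K : Type) [Field K] {n : ℕ} (b : Fin n → ℕ) :
    Module.End K (MvPolynomial (Fin n) K) :=
  (List.ofFn fun i => Dop K i ^ b i).prod

/-- The `n`-th Weyl algebra `A_n`, realized as the `K`-subalgebra of
`End_K(K[x_1,…,x_n])` generated by `X_1,…,X_n, D_1,…,D_n`. -/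
noncomputable def WeylAlg (K : Type) [Field K] (n : ℕ) :
    Subalgebra K (Module.End K (MvPolynomial (Fin n) K)) :=
  Algebra.adjoin K (Set.range (Xop K (n := n)) ∪ Set.range (Dop K (n := n)))

/-- The `i`-th Euler operator `θ_i := X_i ∘ D_i`. -/
noncomputable def thetaOp (K : Type) [Field K] {n : ℕ} (i : Fin n) :
    Module.End K (MvPolynomial (Fin n) K) :=
  Xop K i * Dop K i

/-- Evaluation `f ↦ f(θ_1,…,θ_n)` of a polynomial `f ∈ K[t_1,…,t_n]` at the (pairwise
commuting) Euler operators. -/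
noncomputable def thetaEval (K : Type) [Field K] {n : ℕ}
    (f : MvPolynomial (Fin n) K) : Module.End K (MvPolynomial (Fin n) K) :=
  ∑ m ∈ f.support, f.coeff m • (List.ofFn fun i => thetaOp K i ^ m i).prod

/-- The `z`-th graded part `A_n^{(z)}`: the `K`-linear span of the operators
`X^a ∘ D^b` with `b − a = z` componentwise. -/
noncomputable def gradePart (K : Type) [Field K] {n : ℕ} (z : Fin n → ℤ) :
    Submodule K (Module.End K (MvPolynomial (Fin n) K)) :=
  Submodule.span K
    {F | ∃ a b : Fin n → ℕ, (∀ i, (b i : ℤ) - (a i : ℤ) = z i) ∧ F = Xpow K a * Dpow K b}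

/-- `e(z)_i := −z_i` if `z_i < 0`, and `0` otherwise. -/
def ez {n : ℕ} (z : Fin n → ℤ) : Fin n → ℕ := fun i => (-(z i)).toNat

/-- `w(z)_i := z_i` if `z_i > 0`, and `0` otherwise. -/
def wz {n : ℕ} (z : Fin n → ℤ) : Fin n → ℕ := fun i => (z i).toNat

/-- The polynomial `γ̃^{(κ)}_{a,b} ∈ K[t_1,…,t_n]` from the paper:
`1` if `a, b ≥ 0` or `a, b ≤ 0`;
`∏_{τ=0}^{|a|−1}(t_κ − τ)` if `a < 0 < b`, `|a| ≤ |b|`;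
`∏_{τ=0}^{|b|−1}(t_κ − τ − |a| + |b|)` if `a < 0 < b`, `|a| > |b|`;
`∏_{τ=1}^{a}(t_κ + τ)` if `b < 0 < a`, `|a| ≤ |b|`;
`∏_{τ=1}^{|b|}(t_κ + τ + |a| − |b|)` if `b < 0 < a`, `|a| > |b|`. -/
noncomputable def gammaT (K : Type) [Field K] {n : ℕ} (κ : Fin n) (a b : ℤ) :
    MvPolynomial (Fin n) K :=
  if (0 ≤ a ∧ 0 ≤ b) ∨ (a ≤ 0 ∧ b ≤ 0) then 1
  else if a < 0 ∧ 0 < b ∧ a.natAbs ≤ b.natAbs then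
    ∏ τ ∈ Finset.range a.natAbs, (X κ - (τ : MvPolynomial (Fin n) K))
  else if a < 0 ∧ 0 < b then
    ∏ τ ∈ Finset.range b.natAbs,
      (X κ - (τ : MvPolynomial (Fin n) K)
        - (a.natAbs : MvPolynomial (Fin n) K) + (b.natAbs : MvPolynomial (Fin n) K))
  else if 0 < a ∧ b < 0 ∧ a.natAbs ≤ b.natAbs then
    ∏ τ ∈ Finset.range a.natAbs, (X κ + ((τ : MvPolynomial (Fin n) K) + 1))
  else
    ∏ τ ∈ Finset.range b.natAbs,
      (X κ + ((τ : MvPolynomial (Fin n) K) + 1)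
        + (a.natAbs : MvPolynomial (Fin n) K) - (b.natAbs : MvPolynomial (Fin n) K))

/-- `γ_{α,β} := ∏_{κ=1}^{n} γ̃^{(κ)}_{α_κ,β_κ}`. -/
noncomputable def gammaPoly (K : Type) [Field K] {n : ℕ} (α β : Fin n → ℤ) :
    MvPolynomial (Fin n) K :=
  ∏ κ : Fin n, gammaT K κ (α κ) (β κ)

/-- `g^{[α]}`: the polynomial `g` with each variable `t_i` replaced by `t_i + α_i`. -/
noncomputable def shiftPoly (K : Type) [Field K] {n : ℕ} (α : Fin n → ℤ)
    (g : MvPolynomial (Fin n) K) : MvPolynomial (Fin n) K :=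
  MvPolynomial.aeval (fun i => X i + MvPolynomial.C ((α i : K))) g


variable (K : Type) [Field K] {n : ℕ}

noncomputable def mono (m : Fin n → ℕ) : MvPolynomial (Fin n) K :=
  monomial (Finsupp.equivFunOnFinite.symm m) 1

lemma symm_add (f g : Fin n → ℕ) : Finsupp.equivFunOnFinite.symm (f+g) =
    Finsupp.equivFunOnFinite.symm f + Finsupp.equivFunOnFinite.symm g := by ext j; simp

lemma symm_sub (f g : Fin n → ℕ) : Finsupp.equivFunOnFinite.symm (f-g) =
    Finsupp.equivFunOnFinite.symm f - Finsupp.equivFunOnFinite.symm g := by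
  ext j; simp [Finsupp.tsub_apply]

lemma single_eq_symm (i : Fin n) (k : ℕ) :
    Finsupp.single i k = Finsupp.equivFunOnFinite.symm (Pi.single i k) := by
  ext j; simp [Finsupp.single_apply, Pi.single_apply]

lemma Xop_mono (i : Fin n) (m : Fin n → ℕ) :
    Xop K i (mono K m) = mono K (m + Pi.single i 1) := by
  simp only [Xop, LinearMap.mulLeft_apply, mono, X, monomial_mul, one_mul, symm_add,
    single_eq_symm]
  rw [add_comm]

lemma Dop_mono (i : Fin n) (m : Fin n → ℕ) :
    Dop K i (mono K m) = ((m i : K)) • mono K (m - Pi.single i 1) := by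
  show pderiv i (mono K m) = _
  rw [mono, pderiv_monomial, mono, smul_monomial, one_mul, single_eq_symm, ← symm_sub]
  simp

lemma Xop_pow_mono (i : Fin n) (k : ℕ) (m : Fin n → ℕ) :
    (Xop K i ^ k) (mono K m) = mono K (m + Pi.single i k) := by
  induction k generalizing m with
  | zero => simp
  | succ k ih =>
      rw [pow_succ, Module.End.mul_apply, Xop_mono, ih]
      congr 1
      ext j
      by_cases h : j = i <;> simp [h]
      omega

lemma Dop_pow_mono (i : Fin n) (k : ℕ) (m : Fin n → ℕ) :
    (Dop K i ^ k) (mono K m) = (((m i).descFactorial k : K)) • mono K (m - Pi.single i k) := by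
  induction k with
  | zero => simp
  | succ k ih =>
      rw [pow_succ', Module.End.mul_apply, ih, map_smul, Dop_mono, smul_smul]
      have h1 : (m - (Pi.single i k : Fin n → ℕ)) i = m i - k := by simp
      have h2 : m - Pi.single i k - Pi.single i 1 = m - Pi.single i (k+1) := by
        ext j; by_cases h : j = i <;> simp [h]; omega
      rw [h1, h2]
      congr 1
      rw [Nat.descFactorial_succ, Nat.cast_mul, mul_comm]

lemma thetaOp_pow_mono (i : Fin n) (k : ℕ) (m : Fin n → ℕ) :
    (thetaOp K i ^ k) (mono K m) = ((m i : K) ^ k) • mono K m := by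
  induction k with
  | zero => simp
  | succ k ih =>
      have hth : thetaOp K i (mono K m) = ((m i : K)) • mono K m := by
        rw [thetaOp, Module.End.mul_apply, Dop_mono, map_smul, Xop_mono]
        rcases Nat.eq_zero_or_pos (m i) with h | h
        · simp [h]
        · congr 2
          ext j; by_cases hj : j = i <;> simp [hj]; omega
      rw [pow_succ', Module.End.mul_apply, ih, map_smul, hth, smul_smul, pow_succ]

lemma prodX_mono (l : List (Fin n)) (a : Fin n → ℕ) (m : Fin n → ℕ) :
    ((l.map fun i => Xop K i ^ a i).prod) (mono K m)
      = mono K (m + (l.map fun i => (Pi.single i (a i) : Fin n → ℕ)).sum) := by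
  induction l generalizing m with
  | nil => simp
  | cons i l ih =>
      simp only [List.map_cons, List.prod_cons, List.sum_cons, Module.End.mul_apply]
      rw [ih, Xop_pow_mono]
      congr 1
      ext j
      simp [add_comm, add_assoc, add_left_comm]

lemma prodTheta_mono (l : List (Fin n)) (a : Fin n → ℕ) (m : Fin n → ℕ) :
    ((l.map fun i => thetaOp K i ^ a i).prod) (mono K m)
      = ((l.map fun i => (m i : K) ^ a i).prod) • mono K m := by
  induction l with
  | nil => simp
  | cons i l ih =>
      simp only [List.map_cons, List.prod_cons, Module.End.mul_apply]
      rw [ih, map_smul, thetaOp_pow_mono, smul_smul, mul_comm]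

lemma prodD_mono (l : List (Fin n)) (hl : l.Nodup) (b : Fin n → ℕ) (m : Fin n → ℕ) :
    ((l.map fun i => Dop K i ^ b i).prod) (mono K m)
      = ((l.map fun i => ((m i).descFactorial (b i) : K)).prod)
          • mono K (m - (l.map fun i => (Pi.single i (b i) : Fin n → ℕ)).sum) := by
  induction l generalizing m with
  | nil => simp
  | cons i l ih =>
      rw [List.nodup_cons] at hl
      simp only [List.map_cons, List.prod_cons, List.sum_cons, Module.End.mul_apply]
      rw [ih hl.2, map_smul, Dop_pow_mono, smul_smul]
      have hsum : ∀ j, ((l.map fun i => (Pi.single i (b i) : Fin n → ℕ)).sum) j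
          = ∑ x ∈ l.toFinset, (Pi.single x (b x) : Fin n → ℕ) j := by
        intro j
        rw [← List.sum_toFinset _ hl.2]
        simp
      have hi : (m - (l.map fun i => (Pi.single i (b i) : Fin n → ℕ)).sum) i = m i := by
        have : ((l.map fun i => (Pi.single i (b i) : Fin n → ℕ)).sum) i = 0 := by
          rw [hsum]
          apply Finset.sum_eq_zero
          intro j hj
          have : j ≠ i := fun h => hl.1 (h ▸ List.mem_toFinset.mp hj)
          simp [Pi.single_apply, this]
        simp [Pi.sub_apply, this]
      rw [hi, mul_comm]
      congr 2
      funext j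
      have h3 : ∀ (u v : Fin n → ℕ) (j), (u - v) j = u j - v j := fun _ _ _ => rfl
      have h4 : ∀ (u v : Fin n → ℕ) (j), (u + v) j = u j + v j := fun _ _ _ => rfl
      rw [h3, h3, h3, h4]
      omega

lemma Xpow_mono (a : Fin n → ℕ) (m : Fin n → ℕ) :
    Xpow K a (mono K m) = mono K (m + a) := by
  rw [Xpow, List.ofFn_eq_map, prodX_mono]
  congr 1
  have : (List.map (fun i => (Pi.single i (a i) : Fin n → ℕ)) (List.finRange n)).sum
      = ∑ i, (Pi.single i (a i) : Fin n → ℕ) := (Fin.sum_univ_def _).symm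
  rw [this, Finset.univ_sum_single]

lemma Dpow_mono (b : Fin n → ℕ) (m : Fin n → ℕ) :
    Dpow K b (mono K m)
      = ((∏ i, (m i).descFactorial (b i) : ℕ) : K) • mono K (m - b) := by
  rw [Dpow, List.ofFn_eq_map, prodD_mono _ _ (List.nodup_finRange n)]
  have h1 : (List.map (fun i => (Pi.single i (b i) : Fin n → ℕ)) (List.finRange n)).sum
      = ∑ i, (Pi.single i (b i) : Fin n → ℕ) := (Fin.sum_univ_def _).symm
  have h2 : (List.map (fun i => ((m i).descFactorial (b i) : K)) (List.finRange n)).prod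
      = ∏ i, ((m i).descFactorial (b i) : K) := (Fin.prod_univ_def _).symm
  rw [h1, h2, Finset.univ_sum_single]
  push_cast
  rfl

lemma thetaEval_mono (f : MvPolynomial (Fin n) K) (m : Fin n → ℕ) :
    thetaEval K f (mono K m) = (eval (fun i => (m i : K)) f) • mono K m := by
  rw [thetaEval, eval_eq', LinearMap.sum_apply, Finset.sum_smul]
  apply Finset.sum_congr rfl
  intro d _
  rw [LinearMap.smul_apply, List.ofFn_eq_map, prodTheta_mono, smul_smul]
  congr 2

def shiftExp {n : ℕ} (z : Fin n → ℤ) (m : Fin n → ℕ) : Fin n → ℕ :=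
  fun i => m i - (z i).toNat + (-(z i)).toNat

noncomputable def opOf (K : Type) [Field K] {n : ℕ} (z : Fin n → ℤ)
    (f : MvPolynomial (Fin n) K) : Module.End K (MvPolynomial (Fin n) K) :=
  thetaEval K f * (Xpow K (ez z) * Dpow K (wz z))

noncomputable def coeffOf (K : Type) [Field K] {n : ℕ} (z : Fin n → ℤ)
    (f : MvPolynomial (Fin n) K) (m : Fin n → ℕ) : K :=
  eval (fun i => ((shiftExp z m i : ℕ) : K)) f * ((∏ i, (m i).descFactorial (wz z i) : ℕ) : K)

lemma opOf_mono (z : Fin n → ℤ) (f : MvPolynomial (Fin n) K) (m : Fin n → ℕ) :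
    opOf K z f (mono K m) = coeffOf K z f m • mono K (shiftExp z m) := by
  rw [opOf, Module.End.mul_apply, Module.End.mul_apply, Dpow_mono, map_smul, Xpow_mono, map_smul,
    thetaEval_mono, coeffOf, smul_smul, mul_comm]
  have : m - wz z + ez z = shiftExp z m := by
    funext j
    show (m - wz z) j + ez z j = _
    show (m j - wz z j) + ez z j = _
    rfl
  rw [this]

lemma thetaEval_zero : thetaEval K (0 : MvPolynomial (Fin n) K) = 0 := by
  simp [thetaEval]

lemma opOf_zero (z : Fin n → ℤ) : opOf K z (0 : MvPolynomial (Fin n) K) = 0 := by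
  rw [opOf, thetaEval_zero, zero_mul]

lemma thetaEval_add (f g : MvPolynomial (Fin n) K) :
    thetaEval K (f + g) = thetaEval K f + thetaEval K g := by
  classical
  have key : ∀ (h : MvPolynomial (Fin n) K) (s : Finset (Fin n →₀ ℕ)), h.support ⊆ s →
      thetaEval K h = ∑ m ∈ s, h.coeff m • (List.ofFn fun i => thetaOp K i ^ m i).prod := by
    intro h s hs
    rw [thetaEval]
    exact Finset.sum_subset hs (by intro x _ hx; rw [notMem_support_iff.mp hx, zero_smul])
  rw [key f (f.support ∪ g.support ∪ (f+g).support) (by intro x hx; simp [Finset.mem_union, hx]),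
    key g (f.support ∪ g.support ∪ (f+g).support) (by intro x hx; simp [Finset.mem_union, hx]),
    key (f+g) (f.support ∪ g.support ∪ (f+g).support) (by intro x hx; simp [Finset.mem_union, hx]),
    ← Finset.sum_add_distrib]
  apply Finset.sum_congr rfl
  intro d _
  rw [coeff_add, add_smul]

lemma opOf_add (z : Fin n → ℤ) (f g : MvPolynomial (Fin n) K) :
    opOf K z (f + g) = opOf K z f + opOf K z g := by
  rw [opOf, opOf, opOf, thetaEval_add, add_mul]

lemma opOf_sum {ι : Type*} (s : Finset ι) (z : Fin n → ℤ) (f : ι → MvPolynomial (Fin n) K) :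
    opOf K z (∑ i ∈ s, f i) = ∑ i ∈ s, opOf K z (f i) := by
  classical
  induction s using Finset.induction with
  | empty => simp [opOf_zero]
  | insert _ _ hx ih => rw [Finset.sum_insert hx, Finset.sum_insert hx, opOf_add, ih]

lemma grid_zero [CharZero K] (n : ℕ) : ∀ (p : MvPolynomial (Fin n) K) (N : ℕ),
    (∀ m : Fin n → ℕ, (∀ i, N ≤ m i) → eval (fun i => (m i : K)) p = 0) → p = 0 := by
  induction n with
  | zero =>
      intro p N h
      obtain ⟨a, rfl⟩ := C_surjective (Fin 0) p
      have := h (fun _ => N) (fun i => le_refl N)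
      rw [eval_C] at this
      rw [this, map_zero]
  | succ n ih =>
      intro p N h
      have key : ∀ j, (finSuccEquiv K n p).coeff j = 0 := by
        intro j
        apply ih _ N
        intro s hs
        have hQ : (Polynomial.map (eval fun i => (s i : K)) (finSuccEquiv K n p)) = 0 := by
          apply Polynomial.eq_zero_of_infinite_isRoot
          apply Set.Infinite.mono (s := (fun k : ℕ => (k : K)) '' Set.Ici N)
          · rintro x ⟨k, hk, rfl⟩
            have hcast : (fun i => ((Fin.cons k s : Fin (n+1) → ℕ) i : K))
                = Fin.cons (k : K) (fun i => (s i : K)) := by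
              funext i
              refine Fin.cases ?_ ?_ i <;> simp
            have := h (Fin.cons k s) (fun i => by
              refine Fin.cases ?_ ?_ i
              · simpa using hk
              · intro j; simpa using hs j)
            rw [hcast] at this
            rw [eval_eq_eval_mv_eval'] at this
            exact this
          · exact Set.Infinite.image
              (fun a _ b _ hab => Nat.cast_injective hab) (Set.Ici_infinite N)
        have := congrArg (fun Q => Q.coeff j) hQ
        simpa [Polynomial.coeff_map] using this
      have hq : finSuccEquiv K n p = 0 := Polynomial.ext (by simp [key])
      exact (map_eq_zero_iff _ (AlgEquiv.injective _)).mp hq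

noncomputable def gammaVal (K : Type) [Field K] (x : K) (a b : ℤ) : K :=
  if (0 ≤ a ∧ 0 ≤ b) ∨ (a ≤ 0 ∧ b ≤ 0) then 1
  else if a < 0 ∧ 0 < b ∧ a.natAbs ≤ b.natAbs then
    ∏ τ ∈ Finset.range a.natAbs, (x - (τ : K))
  else if a < 0 ∧ 0 < b then
    ∏ τ ∈ Finset.range b.natAbs, (x - (τ : K) - (a.natAbs : K) + (b.natAbs : K))
  else if 0 < a ∧ b < 0 ∧ a.natAbs ≤ b.natAbs then
    ∏ τ ∈ Finset.range a.natAbs, (x + ((τ : K) + 1))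
  else
    ∏ τ ∈ Finset.range b.natAbs, (x + ((τ : K) + 1) + (a.natAbs : K) - (b.natAbs : K))

lemma eval_gammaT (v : Fin n → K) (κ : Fin n) (a b : ℤ) :
    eval v (gammaT K κ a b) = gammaVal K (v κ) a b := by
  rw [gammaT, gammaVal]
  split_ifs <;> simp

lemma descFactorial_add (m k l : ℕ) :
    m.descFactorial (k + l) = m.descFactorial k * (m - k).descFactorial l := by
  induction l with
  | zero => simp
  | succ l ih =>
      rw [← Nat.add_assoc, Nat.descFactorial_succ, ih, Nat.descFactorial_succ, Nat.sub_sub]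
      ring

lemma cast_prod_sub (t N : ℕ) (h : N ≤ t) :
    ∏ τ ∈ Finset.range N, ((t : K) - (τ : K)) = ((t.descFactorial N : ℕ) : K) := by
  rw [Nat.descFactorial_eq_prod_range, Nat.cast_prod]
  apply Finset.prod_congr rfl
  intro τ hτ
  rw [Nat.cast_sub (by simp at hτ; omega)]

lemma cast_prod_add (t N : ℕ) :
    ∏ τ ∈ Finset.range N, ((t : K) + (τ : K) + 1) = (((t + N).descFactorial N : ℕ) : K) := by
  rw [Nat.descFactorial_eq_prod_range, Nat.cast_prod, ← Finset.prod_range_reflect]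
  apply Finset.prod_congr rfl
  intro τ hτ
  simp only [Finset.mem_range] at hτ
  rw [show t + N - τ = t + (N - 1 - τ) + 1 by omega]
  push_cast
  ring

lemma key_eq [CharZero K] (a b : ℤ) (m : ℕ) (hb : b.toNat ≤ m)
    (ha : a.toNat ≤ m - b.toNat + (-b).toNat) :
    ((m.descFactorial b.toNat : ℕ) : K)
        * (((m - b.toNat + (-b).toNat).descFactorial a.toNat : ℕ) : K)
      = gammaVal K (((m - (a+b).toNat + (-(a+b)).toNat : ℕ)) : K) a b
        * ((m.descFactorial (a+b).toNat : ℕ) : K) := by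
  by_cases h1 : (0 ≤ a ∧ 0 ≤ b) ∨ (a ≤ 0 ∧ b ≤ 0)
  · rw [gammaVal, if_pos h1, one_mul]
    rcases h1 with ⟨ha0, hb0⟩ | ⟨ha0, hb0⟩
    · have e1 : (-b).toNat = 0 := by omega
      have e2 : (a+b).toNat = b.toNat + a.toNat := by omega
      rw [e1, e2, add_zero, ← Nat.cast_mul, descFactorial_add]
    · have e1 : a.toNat = 0 := by omega
      have e2 : b.toNat = 0 := by omega
      have e3 : (a+b).toNat = 0 := by omega
      simp [e1, e2, e3]
  · have hmix : (a < 0 ∧ 0 < b) ∨ (0 < a ∧ b < 0) := by omega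
    rcases hmix with ⟨haneg, hbpos⟩ | ⟨hapos, hbneg⟩
    · -- a < 0 < b
      have e1 : a.toNat = 0 := by omega
      have e2 : (-b).toNat = 0 := by omega
      have e3 : b.toNat = b.natAbs := by omega
      by_cases hle : a.natAbs ≤ b.natAbs
      · -- |a| ≤ |b|
        rw [gammaVal, if_neg h1, if_pos ⟨haneg, hbpos, hle⟩]
        have e4 : (a+b).toNat = b.natAbs - a.natAbs := by omega
        have e5 : (-(a+b)).toNat = 0 := by omega
        simp only [e1, e2, e4, e5, Nat.descFactorial_zero, Nat.cast_one, mul_one, add_zero,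
          Nat.sub_zero]
        rw [cast_prod_sub K _ _ (by omega), ← Nat.cast_mul, Nat.cast_inj,
          show b.toNat = (b.natAbs - a.natAbs) + a.natAbs by omega, descFactorial_add]
        ring
      · -- |a| > |b|
        rw [gammaVal, if_neg h1, if_neg (fun h => hle h.2.2), if_pos ⟨haneg, hbpos⟩]
        have e4 : (a+b).toNat = 0 := by omega
        have e5 : (-(a+b)).toNat = a.natAbs - b.natAbs := by omega
        simp only [e1, e2, e4, e5, Nat.descFactorial_zero, Nat.cast_one, mul_one, add_zero,
          Nat.sub_zero]
        have hfac : ∀ τ ∈ Finset.range b.natAbs,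
            ((m + (a.natAbs - b.natAbs) : ℕ) : K) - (τ : K) - (a.natAbs : K) + (b.natAbs : K)
              = ((m - τ : ℕ) : K) := by
          intro τ hτ
          simp only [Finset.mem_range] at hτ
          rw [Nat.cast_add, Nat.cast_sub (by omega), Nat.cast_sub (by omega)]
          ring
        rw [Finset.prod_congr rfl hfac]
        rw [show (∏ τ ∈ Finset.range b.natAbs, ((m - τ : ℕ) : K))
            = ((m.descFactorial b.natAbs : ℕ) : K) from ?_]
        · rw [e3]
        · rw [Nat.descFactorial_eq_prod_range, Nat.cast_prod]
    · -- b < 0 < a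
      have e1 : b.toNat = 0 := by omega
      have e2 : (-b).toNat = b.natAbs := by omega
      have e3 : a.toNat = a.natAbs := by omega
      have hmq : a.natAbs ≤ m + b.natAbs := by omega
      by_cases hle : a.natAbs ≤ b.natAbs
      · rw [gammaVal, if_neg h1, if_neg (by omega), if_neg (by omega), if_pos ⟨hapos, hbneg, hle⟩]
        have e4 : (a+b).toNat = 0 := by omega
        have e5 : (-(a+b)).toNat = b.natAbs - a.natAbs := by omega
        simp only [e1, e2, e3, e4, e5, Nat.descFactorial_zero, Nat.cast_one, one_mul, mul_one,
          Nat.sub_zero]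
        have hfac : ∀ τ ∈ Finset.range a.natAbs,
            ((m + (b.natAbs - a.natAbs) : ℕ) : K) + ((τ : K) + 1)
              = ((m + (b.natAbs - a.natAbs) : ℕ) : K) + (τ : K) + 1 := by
          intro τ _; ring
        rw [Finset.prod_congr rfl hfac, cast_prod_add]
        congr 2
        omega
      · rw [gammaVal, if_neg h1, if_neg (by omega), if_neg (by omega), if_neg (by omega)]
        have e4 : (a+b).toNat = a.natAbs - b.natAbs := by omega
        have e5 : (-(a+b)).toNat = 0 := by omega
        simp only [e1, e2, e3, e4, e5, Nat.descFactorial_zero, Nat.cast_one, one_mul,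
          Nat.sub_zero, add_zero]
        have hfac : ∀ τ ∈ Finset.range b.natAbs,
            ((m - (a.natAbs - b.natAbs) : ℕ) : K) + ((τ : K) + 1) + (a.natAbs : K) - (b.natAbs : K)
              = ((m + τ + 1 : ℕ) : K) := by
          intro τ hτ
          simp only [Finset.mem_range] at hτ
          rw [Nat.cast_sub (by omega), Nat.cast_sub (by omega)]
          push_cast
          ring
        rw [Finset.prod_congr rfl hfac, ← Nat.cast_prod, ← Nat.cast_mul, Nat.cast_inj]
        have h7 := descFactorial_add (m + b.natAbs) b.natAbs (a.natAbs - b.natAbs)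
        rw [show b.natAbs + (a.natAbs - b.natAbs) = a.natAbs by omega, Nat.add_sub_cancel] at h7
        rw [h7]
        congr 1
        rw [Nat.descFactorial_eq_prod_range, ← Finset.prod_range_reflect]
        apply Finset.prod_congr rfl
        intro τ hτ
        simp only [Finset.mem_range] at hτ
        omega

lemma key_deg (a b : ℤ) (m : ℕ)
    (h : m < b.toNat ∨ (b.toNat ≤ m ∧ m - b.toNat + (-b).toNat < a.toNat)) :
    gammaVal K (((m - (a+b).toNat + (-(a+b)).toNat : ℕ)) : K) a b
        * ((m.descFactorial (a+b).toNat : ℕ) : K) = 0 := by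
  rcases h with hmb | ⟨hbm, hma⟩
  · have hbpos : 0 < b := by omega
    rcases le_or_gt 0 a with ha0 | haneg
    · rw [gammaVal, if_pos (Or.inl ⟨ha0, le_of_lt hbpos⟩), one_mul,
        Nat.descFactorial_of_lt (by omega), Nat.cast_zero]
    · by_cases hle : a.natAbs ≤ b.natAbs
      · rcases Nat.lt_or_ge m (b.natAbs - a.natAbs) with hsm | hsm
        · rw [Nat.descFactorial_of_lt (by omega), Nat.cast_zero, mul_zero]
        · have e4 : (a+b).toNat = b.natAbs - a.natAbs := by omega
          have e5 : (-(a+b)).toNat = 0 := by omega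
          rw [gammaVal, if_neg (by omega), if_pos ⟨haneg, hbpos, hle⟩]
          rw [Finset.prod_eq_zero (i := m - (a+b).toNat + (-(a+b)).toNat)
            (by simp only [Finset.mem_range]; omega) (by rw [sub_self]), zero_mul]
      · rw [gammaVal, if_neg (by omega), if_neg (by omega), if_pos ⟨haneg, hbpos⟩]
        have e4 : (a+b).toNat = 0 := by omega
        have e5 : (-(a+b)).toNat = a.natAbs - b.natAbs := by omega
        rw [Finset.prod_eq_zero (i := m) (by simp only [Finset.mem_range]; omega) ?_, zero_mul]
        rw [e4, e5, Nat.sub_zero, Nat.cast_add, Nat.cast_sub (by omega)]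
        ring
  · have hapos : 0 < a := by omega
    rcases le_or_gt 0 b with hb0 | hbneg
    · rw [Nat.descFactorial_of_lt (by omega), Nat.cast_zero, mul_zero]
    · rw [Nat.descFactorial_of_lt (by omega), Nat.cast_zero, mul_zero]

lemma eval_shiftPoly (v : Fin n → K) (α : Fin n → ℤ) (g : MvPolynomial (Fin n) K) :
    eval v (shiftPoly K α g) = eval (fun i => v i + ((α i : ℤ) : K)) g := by
  rw [shiftPoly, aeval_eq_bind₁]
  have h0 : eval v = eval₂Hom (RingHom.id K) v := by rw [eval]
  rw [h0, eval₂Hom_bind₁]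
  apply congrFun
  apply congrArg
  congr 1
  funext i
  simp

lemma opOf_mul [CharZero K] (α β : Fin n → ℤ) (p q : MvPolynomial (Fin n) K) :
    opOf K α p * opOf K β q
      = opOf K (α + β) (p * shiftPoly K α q * gammaPoly K α β) := by
  apply (basisMonomials (Fin n) K).ext
  intro d
  have hb : (basisMonomials (Fin n) K) d = mono K ⇑d := by
    have := congrFun (coe_basisMonomials (Fin n) K) d
    rw [this, mono, Finsupp.equivFunOnFinite_symm_coe]
  rw [hb, Module.End.mul_apply, opOf_mono, map_smul, opOf_mono, opOf_mono, smul_smul]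
  set m : Fin n → ℕ := ⇑d with hm
  by_cases hdeg : ∀ i, wz β i ≤ m i ∧ wz α i ≤ shiftExp β m i
  · have hexp : shiftExp α (shiftExp β m) = shiftExp (α + β) m := by
      funext i
      have h1 := (hdeg i).1
      have h2 := (hdeg i).2
      simp only [shiftExp, wz, ez, Pi.add_apply] at *
      omega
    rw [hexp]
    congr 1
    -- scalar identity
    rw [coeffOf, coeffOf, coeffOf, map_mul, map_mul, eval_shiftPoly]
    have hpt2 : (fun i => ((shiftExp α (shiftExp β m) i : ℕ) : K))
        = fun i => ((shiftExp (α + β) m i : ℕ) : K) := by rw [hexp]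
    have hpt1 : (fun i => ((shiftExp (α + β) m i : ℕ) : K) + ((α i : ℤ) : K))
        = fun i => ((shiftExp β m i : ℕ) : K) := by
      funext i
      have h1 := (hdeg i).1
      have h2 := (hdeg i).2
      have hz : ((shiftExp (α + β) m i : ℕ) : ℤ) + α i = ((shiftExp β m i : ℕ) : ℤ) := by
        simp only [shiftExp, wz, ez, Pi.add_apply] at *
        omega
      exact_mod_cast congrArg (Int.cast : ℤ → K) hz
    have hgam : eval (fun i => ((shiftExp (α + β) m i : ℕ) : K)) (gammaPoly K α β)
        = ∏ κ : Fin n, gammaVal K (((shiftExp (α + β) m κ : ℕ)) : K) (α κ) (β κ) := by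
      rw [gammaPoly, map_prod]
      exact Finset.prod_congr rfl fun κ _ => eval_gammaT K _ κ _ _
    rw [hpt2, hpt1, hgam]
    have hC : ((∏ i, (m i).descFactorial (wz β i) : ℕ) : K)
          * ((∏ i, (shiftExp β m i).descFactorial (wz α i) : ℕ) : K)
        = (∏ κ : Fin n, gammaVal K (((shiftExp (α + β) m κ : ℕ)) : K) (α κ) (β κ))
          * ((∏ i, (m i).descFactorial (wz (α + β) i) : ℕ) : K) := by
      rw [Nat.cast_prod, Nat.cast_prod, Nat.cast_prod, ← Finset.prod_mul_distrib,
        ← Finset.prod_mul_distrib]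
      apply Finset.prod_congr rfl
      intro κ _
      have h1 := (hdeg κ).1
      have h2 := (hdeg κ).2
      have := key_eq K (α κ) (β κ) (m κ) (by exact h1) (by exact h2)
      simp only [shiftExp, wz, ez, Pi.add_apply] at *
      exact this
    calc (eval (fun i => ((shiftExp β m i : ℕ) : K)) q
            * ((∏ i, (m i).descFactorial (wz β i) : ℕ) : K))
          * (eval (fun i => ((shiftExp (α + β) m i : ℕ) : K)) p
            * ((∏ i, (shiftExp β m i).descFactorial (wz α i) : ℕ) : K))
        = eval (fun i => ((shiftExp (α + β) m i : ℕ) : K)) p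
            * eval (fun i => ((shiftExp β m i : ℕ) : K)) q
            * (((∏ i, (m i).descFactorial (wz β i) : ℕ) : K)
              * ((∏ i, (shiftExp β m i).descFactorial (wz α i) : ℕ) : K)) := by ring
      _ = _ := by rw [hC]; ring
  · push_neg at hdeg
    obtain ⟨κ, hκ⟩ := hdeg
    have hL : coeffOf K β q m * coeffOf K α p (shiftExp β m) = 0 := by
      rw [coeffOf, coeffOf]
      by_cases h1 : wz β κ ≤ m κ
      · apply mul_eq_zero_of_right
        apply mul_eq_zero_of_right
        rw [Finset.prod_eq_zero (Finset.mem_univ κ) (Nat.descFactorial_of_lt (hκ h1)),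
          Nat.cast_zero]
      · apply mul_eq_zero_of_left
        apply mul_eq_zero_of_right
        rw [Finset.prod_eq_zero (Finset.mem_univ κ) (Nat.descFactorial_of_lt (by omega)),
          Nat.cast_zero]
    have hR : coeffOf K (α + β) (p * shiftPoly K α q * gammaPoly K α β) m = 0 := by
      rw [coeffOf, map_mul]
      have hgam : eval (fun i => ((shiftExp (α + β) m i : ℕ) : K)) (gammaPoly K α β)
          = ∏ κ' : Fin n, gammaVal K (((shiftExp (α + β) m κ' : ℕ)) : K) (α κ') (β κ') := by
        rw [gammaPoly, map_prod]
        exact Finset.prod_congr rfl fun κ' _ => eval_gammaT K _ κ' _ _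
      rw [hgam, Nat.cast_prod, mul_assoc, ← Finset.prod_mul_distrib]
      rw [Finset.prod_eq_zero (Finset.mem_univ κ) ?_, mul_zero]
      have hd : m κ < wz β κ ∨ (wz β κ ≤ m κ ∧ shiftExp β m κ < wz α κ) := by
        by_cases h1 : wz β κ ≤ m κ
        · exact Or.inr ⟨h1, hκ h1⟩
        · exact Or.inl (by omega)
      have := key_deg K (α κ) (β κ) (m κ)
        (by simp only [shiftExp, wz, ez, Pi.add_apply] at *; exact hd)
      simp only [shiftExp, wz, ez, Pi.add_apply] at *
      exact this
    rw [hL, hR, zero_smul, zero_smul]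

lemma coeff_mono (u v : Fin n → ℕ) :
    coeff (Finsupp.equivFunOnFinite.symm u) (mono K v)
      = if v = u then (1 : K) else 0 := by
  rw [mono, coeff_monomial]
  by_cases h : v = u
  · rw [if_pos h, if_pos (by rw [h])]
  · rw [if_neg h, if_neg (fun hc => h (Finsupp.equivFunOnFinite.symm.injective hc))]

lemma opOf_indep [CharZero K] (S : Finset (Fin n → ℤ))
    (F G : (Fin n → ℤ) → MvPolynomial (Fin n) K)
    (h : ∑ z ∈ S, opOf K z (F z) = ∑ z ∈ S, opOf K z (G z)) :
    ∀ z ∈ S, F z = G z := by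
  intro z hz
  classical
  set N : ℕ := S.sup (fun z' => Finset.univ.sup fun i => (z' i).toNat) with hN
  clear_value N
  have hNb : ∀ z' ∈ S, ∀ i, wz z' i ≤ N := by
    intro z' hz' i
    rw [hN]
    exact le_trans (Finset.le_sup (f := fun i => (z' i).toNat) (Finset.mem_univ i))
      (Finset.le_sup (f := fun z' => Finset.univ.sup fun i => (z' i).toNat) hz')
  have heval : ∀ m : Fin n → ℕ, (∀ i, N ≤ m i) →
      eval (fun i => ((shiftExp z m i : ℕ) : K)) (F z)
        = eval (fun i => ((shiftExp z m i : ℕ) : K)) (G z) := by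
    intro m hm
    have happ := congrArg (fun (T : Module.End K (MvPolynomial (Fin n) K)) => T (mono K m)) h
    simp only [LinearMap.sum_apply] at happ
    have hrw : ∀ (F' : (Fin n → ℤ) → MvPolynomial (Fin n) K),
        (∑ z' ∈ S, opOf K z' (F' z') (mono K m))
          = ∑ z' ∈ S, coeffOf K z' (F' z') m • mono K (shiftExp z' m) := fun F' =>
      Finset.sum_congr rfl fun z' _ => by rw [opOf_mono]
    rw [hrw F, hrw G] at happ
    have hcoe := congrArg (coeff (Finsupp.equivFunOnFinite.symm (shiftExp z m))) happ
    rw [coeff_sum, coeff_sum] at hcoe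
    have hinj : ∀ z' ∈ S, shiftExp z' m = shiftExp z m → z' = z := by
      intro z' hz' he
      funext i
      have h0 := congrFun he i
      have h1 := hNb z' hz' i
      have h2 := hNb z hz i
      have h3 := hm i
      simp only [shiftExp, wz] at h0 h1 h2
      clear * - h0 h1 h2 h3
      omega
    have hred : ∀ (F' : (Fin n → ℤ) → MvPolynomial (Fin n) K),
        (∑ z' ∈ S, coeff (Finsupp.equivFunOnFinite.symm (shiftExp z m))
            (coeffOf K z' (F' z') m • mono K (shiftExp z' m)))
          = coeffOf K z (F' z) m := by
      intro F'
      rw [Finset.sum_eq_single z]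
      · rw [coeff_smul, coeff_mono, if_pos rfl, smul_eq_mul, mul_one]
      · intro z' hz' hne
        rw [coeff_smul, coeff_mono, if_neg (fun hc => hne (hinj z' hz' hc)), smul_eq_mul,
          mul_zero]
      · intro hzz; exact absurd hz hzz
    rw [hred F, hred G] at hcoe
    have hCne : ((∏ i, (m i).descFactorial (wz z i) : ℕ) : K) ≠ 0 := by
      rw [Nat.cast_ne_zero]
      apply Finset.prod_ne_zero_iff.mpr
      intro i _
      have h4 := hNb z hz i
      have h5 := hm i
      intro hc
      rw [Nat.descFactorial_eq_zero_iff_lt] at hc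
      clear * - hc h4 h5
      omega
    exact mul_right_cancel₀ hCne hcoe
  have hsub : F z - G z = 0 := by
    apply grid_zero K n _ (N + Finset.univ.sup fun i => (-(z i)).toNat)
    intro t ht
    set m : Fin n → ℕ := fun i => t i - (-(z i)).toNat + (z i).toNat with hmdef
    clear_value m
    have hsup : ∀ i, (-(z i)).toNat ≤ Finset.univ.sup fun i => (-(z i)).toNat := fun i =>
      Finset.le_sup (f := fun i => (-(z i)).toNat) (Finset.mem_univ i)
    have hm : ∀ i, N ≤ m i := by
      intro i
      have := ht i
      have := hsup i
      rw [hmdef]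
      show N ≤ t i - (-(z i)).toNat + (z i).toNat
      clear * - ht hsup
      have h5 := ht i
      have h6 := hsup i
      omega
    have hsh : shiftExp z m = t := by
      funext i
      have := ht i
      have := hsup i
      rw [hmdef]
      simp only [shiftExp, wz]
      clear * - ht hsup
      have h5 := ht i
      have h6 := hsup i
      omega
    have := heval m hm
    rw [hsh] at this
    rw [map_sub, this, sub_self]
  exact sub_eq_zero.mp hsub

/-- Suppose `h = P ∘ Q` in `A_n`, with graded decompositions encoded
by the θ-rewritings `ch, pc, qc : ℤ^n →₀ K[t_1,…,t_n]` (so e.g.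
`h = Σ_z h̃_z(θ) ∘ X^{e(z)} ∘ D^{w(z)}` with `h̃_z = ch z`).  Then for every `z ∈ ℤ^n`
the identity `h̃_z = Σ_{α+β=z} p̃_α · q̃_β^{[α]} · γ_{α,β}` holds in the commutative
polynomial ring `K[t_1,…,t_n]`. -/
theorem factorization_commutative_system (K : Type) [Field K] [CharZero K]
    (n : ℕ) (hn : 0 < n)
    (P Q : Module.End K (MvPolynomial (Fin n) K))
    (ch pc qc : (Fin n → ℤ) →₀ MvPolynomial (Fin n) K)
    (hHdec : P * Q =
      ch.sum fun z f => thetaEval K f * (Xpow K (ez z) * Dpow K (wz z)))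
    (hPdec : P =
      pc.sum fun z f => thetaEval K f * (Xpow K (ez z) * Dpow K (wz z)))
    (hQdec : Q =
      qc.sum fun z f => thetaEval K f * (Xpow K (ez z) * Dpow K (wz z))) :
    ∀ z : Fin n → ℤ,
      ch z = ∑ α ∈ pc.support,
        pc α * shiftPoly K α (qc (z - α)) * gammaPoly K α (z - α) := by
  classical
  intro z
  set R : (Fin n → ℤ) → (Fin n → ℤ) → MvPolynomial (Fin n) K :=
    fun α β => pc α * shiftPoly K α (qc β) * gammaPoly K α β with hR
  set S : Finset (Fin n → ℤ) :=
    Finset.image₂ (· + ·) pc.support qc.support ∪ ch.support with hS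
  have hP' : P = ∑ α ∈ pc.support, opOf K α (pc α) := hPdec
  have hQ' : Q = ∑ β ∈ qc.support, opOf K β (qc β) := hQdec
  have hH' : P * Q = ∑ w ∈ ch.support, opOf K w (ch w) := hHdec
  have h1 : P * Q = ∑ α ∈ pc.support, ∑ β ∈ qc.support, opOf K (α + β) (R α β) := by
    rw [hP', hQ', Finset.sum_mul]
    apply Finset.sum_congr rfl
    intro α _
    rw [Finset.mul_sum]
    apply Finset.sum_congr rfl
    intro β _
    exact opOf_mul K α β (pc α) (qc β)
  have hRzero : ∀ α, ∀ w, qc (w - α) = 0 → R α (w - α) = 0 := by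
    intro α w hq
    rw [hR]
    simp only [hq]
    rw [show shiftPoly K α (0 : MvPolynomial (Fin n) K) = 0 from map_zero _, mul_zero, zero_mul]
  have h2 : ∀ α ∈ pc.support,
      ∑ β ∈ qc.support, opOf K (α + β) (R α β) = ∑ w ∈ S, opOf K w (R α (w - α)) := by
    intro α hα
    have e0 : ∀ β : Fin n → ℤ, (α + β) - α = β := fun β => by abel
    have estep : ∑ β ∈ qc.support, opOf K (α + β) (R α β)
        = ∑ w ∈ qc.support.image (α + ·), opOf K w (R α (w - α)) := by
      rw [Finset.sum_image (fun x _ y _ h => by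
        have := congrArg (· - α) h
        simpa [e0] using this)]
      apply Finset.sum_congr rfl
      intro β _
      rw [e0]
    rw [estep]
    apply Finset.sum_subset
    · intro w hw
      obtain ⟨β, hβ, rfl⟩ := Finset.mem_image.mp hw
      exact Finset.mem_union_left _ (Finset.mem_image₂.mpr ⟨α, hα, β, hβ, rfl⟩)
    · intro w _ hw
      have hq : qc (w - α) = 0 := by
        by_contra hne
        exact hw (Finset.mem_image.mpr ⟨w - α, Finsupp.mem_support_iff.mpr hne, by abel⟩)
      rw [hRzero α w hq, opOf_zero]
  have h3 : P * Q = ∑ w ∈ S, opOf K w (∑ α ∈ pc.support, R α (w - α)) := by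
    rw [h1, Finset.sum_congr rfl h2, Finset.sum_comm]
    apply Finset.sum_congr rfl
    intro w _
    rw [opOf_sum]
  have h4 : P * Q = ∑ w ∈ S, opOf K w (ch w) := by
    rw [hH']
    apply Finset.sum_subset
    · exact Finset.subset_union_right
    · intro w _ hw
      rw [Finsupp.notMem_support_iff.mp hw, opOf_zero]
  have hmain := opOf_indep K S (fun w => ch w)
    (fun w => ∑ α ∈ pc.support, R α (w - α)) (by rw [← h4, h3])
  by_cases hzS : z ∈ S
  · exact hmain z hzS
  · have hch : ch z = 0 :=
      Finsupp.notMem_support_iff.mp (fun hc => hzS (Finset.mem_union_right _ hc))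
    rw [hch]
    symm
    apply Finset.sum_eq_zero
    intro α hα
    have hq : qc (z - α) = 0 := by
      by_contra hne
      exact hzS (Finset.mem_union_left _
        (Finset.mem_image₂.mpr ⟨α, hα, z - α, Finsupp.mem_support_iff.mpr hne, by abel⟩))
    have := hRzero α z hq
    rw [hR] at this
    simpa using this
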